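/- (Theorem 1, exact decomposition.) Let Y and X_0, X_1, …, X_n be jointly distributed random variables on finite sets. For θ ∈ {0,1,…,n} define g₁(θ) = H_L(Y|X_0) + Σ_{k=0}^{θ−1} I_L(Y; X_k | X_{k+1}) and g₂(θ) = Σ_{k=0}^{θ−1} I_L(Y; X_{k+1} | X_k). Then H_L(Y|X_θ) = g₁(θ) − g₂(θ) for every θ, and both g₁ and g₂ are nondecreasing functions of θ. -/

import Mathlib

open Finset

open Classical in
/-- Probability of an event under a pmf `p` on a finite sample space. -/
noncomputable def pr {Ω : Type*} [Fintype Ω] (p : Ω → ℝ) (E : Ω → Prop) : ℝ :=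
  ∑ ω, if E ω then p ω else 0

/-- Conditional distribution of a random variable `Y` given an event `E`. -/
noncomputable def condDist {Ω 𝒴 : Type*} [Fintype Ω] (p : Ω → ℝ) (Y : Ω → 𝒴)
    (E : Ω → Prop) : 𝒴 → ℝ :=
  fun y => pr p (fun ω => Y ω = y ∧ E ω) / pr p E

/-- Expected loss `E_{Y∼P}[L(Y,a)]`. -/
noncomputable def expLoss {𝒴 𝒜 : Type*} [Fintype 𝒴] (L : 𝒴 → 𝒜 → ℝ) (P : 𝒴 → ℝ)
    (a : 𝒜) : ℝ :=
  ∑ y, P y * L y a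

/-- The `L`-entropy `H_L(P) = min_{a∈𝒜} E_{Y∼P}[L(Y,a)]`. -/
noncomputable def Lentropy {𝒴 𝒜 : Type*} [Fintype 𝒴] (L : 𝒴 → 𝒜 → ℝ) (P : 𝒴 → ℝ) : ℝ :=
  ⨅ a : 𝒜, expLoss L P a

/-- The `L`-conditional entropy `H_L(Y|X) = Σ_x P_X(x) H_L(P_{Y|X=x})`. -/
noncomputable def LcondEntropy {Ω 𝒳 𝒴 𝒜 : Type*} [Fintype Ω] [Fintype 𝒳] [Fintype 𝒴]
    (L : 𝒴 → 𝒜 → ℝ) (p : Ω → ℝ) (Y : Ω → 𝒴) (X : Ω → 𝒳) : ℝ :=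
  ∑ x, pr p (fun ω => X ω = x) * Lentropy L (condDist p Y (fun ω => X ω = x))

/-- `b` selects, for every probability mass function `P` on `𝒴`, a Bayes action `b P`. -/
def IsBayesSelector {𝒴 𝒜 : Type*} [Fintype 𝒴] (L : 𝒴 → 𝒜 → ℝ) (b : (𝒴 → ℝ) → 𝒜) : Prop :=
  ∀ P : 𝒴 → ℝ, (∀ y, 0 ≤ P y) → (∑ y, P y) = 1 →
    ∀ a : 𝒜, expLoss L P (b P) ≤ expLoss L P a

/-- The `L`-divergence `D_L(P‖Q) = E_{Y∼P}[L(Y,a_Q)] − E_{Y∼P}[L(Y,a_P)]`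
for the choice `a_P = b P`, `a_Q = b Q` of Bayes actions. -/
noncomputable def Ldiv {𝒴 𝒜 : Type*} [Fintype 𝒴] (L : 𝒴 → 𝒜 → ℝ) (b : (𝒴 → ℝ) → 𝒜)
    (P Q : 𝒴 → ℝ) : ℝ :=
  expLoss L P (b Q) - expLoss L P (b P)

/-- The `L`-conditional mutual information
`I_L(Y;Z|X) = Σ_{x,z} P_{X,Z}(x,z) D_L(P_{Y|X=x,Z=z} ‖ P_{Y|X=x})`. -/
noncomputable def LCMI {Ω 𝒳 𝒴 𝒵 𝒜 : Type*} [Fintype Ω] [Fintype 𝒳] [Fintype 𝒴]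
    [Fintype 𝒵] (L : 𝒴 → 𝒜 → ℝ) (b : (𝒴 → ℝ) → 𝒜) (p : Ω → ℝ)
    (Y : Ω → 𝒴) (Z : Ω → 𝒵) (X : Ω → 𝒳) : ℝ :=
  ∑ x, ∑ z, pr p (fun ω => X ω = x ∧ Z ω = z) *
    Ldiv L b (condDist p Y (fun ω => X ω = x ∧ Z ω = z))
      (condDist p Y (fun ω => X ω = x))

section Aux

variable {Ω 𝒳 𝒴 𝒵 𝒜 : Type*} [Fintype Ω] [Fintype 𝒳] [Fintype 𝒴] [Fintype 𝒵]
  [Fintype 𝒜] [Nonempty 𝒜]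

lemma pr_nonneg (p : Ω → ℝ) (hp : ∀ ω, 0 ≤ p ω) (E : Ω → Prop) : 0 ≤ pr p E := by
  classical
  refine Finset.sum_nonneg fun ω _ => ?_
  split
  exacts [hp ω, le_refl 0]

lemma pr_congr (p : Ω → ℝ) {E F : Ω → Prop} (h : ∀ ω, E ω ↔ F ω) : pr p E = pr p F := by
  classical
  refine Finset.sum_congr rfl fun ω _ => ?_
  simp [h ω]

lemma pr_mono (p : Ω → ℝ) (hp : ∀ ω, 0 ≤ p ω) {E F : Ω → Prop} (h : ∀ ω, E ω → F ω) :
    pr p E ≤ pr p F := by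
  classical
  refine Finset.sum_le_sum fun ω _ => ?_
  by_cases hE : E ω
  · simp [hE, h ω hE]
  · simp only [hE, if_false]
    split
    exacts [hp ω, le_refl 0]

lemma pr_fiber (p : Ω → ℝ) (E : Ω → Prop) (Z : Ω → 𝒵) :
    ∑ z, pr p (fun ω => E ω ∧ Z ω = z) = pr p E := by
  classical
  unfold pr
  rw [Finset.sum_comm]
  refine Finset.sum_congr rfl fun ω _ => ?_
  by_cases hE : E ω <;> simp [hE]

lemma condDist_congr (p : Ω → ℝ) (Y : Ω → 𝒴) {E F : Ω → Prop} (h : ∀ ω, E ω ↔ F ω) :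
    condDist p Y E = condDist p Y F := by
  funext y
  unfold condDist
  rw [pr_congr p h, pr_congr p (fun ω => by rw [h ω])]

lemma mul_condDist (p : Ω → ℝ) (hp : ∀ ω, 0 ≤ p ω) (Y : Ω → 𝒴) (E : Ω → Prop) (y : 𝒴) :
    pr p E * condDist p Y E y = pr p (fun ω => Y ω = y ∧ E ω) := by
  by_cases h : pr p E = 0
  · have h1 : pr p (fun ω => Y ω = y ∧ E ω) = 0 :=
      le_antisymm (h ▸ pr_mono p hp fun ω hω => hω.2) (pr_nonneg p hp _)
    simp [h, h1]
  · rw [condDist, mul_comm, div_mul_cancel₀ _ h]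

lemma condDist_nonneg (p : Ω → ℝ) (hp : ∀ ω, 0 ≤ p ω) (Y : Ω → 𝒴) (E : Ω → Prop) (y : 𝒴) :
    0 ≤ condDist p Y E y :=
  div_nonneg (pr_nonneg p hp _) (pr_nonneg p hp _)

lemma condDist_sum (p : Ω → ℝ) (Y : Ω → 𝒴) (E : Ω → Prop) (h : pr p E ≠ 0) :
    ∑ y, condDist p Y E y = 1 := by
  unfold condDist
  rw [← Finset.sum_div]
  have : ∑ y, pr p (fun ω => Y ω = y ∧ E ω) = pr p E := by
    rw [← pr_fiber p E Y]
    exact Finset.sum_congr rfl fun y _ => pr_congr p fun ω => and_comm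
  rw [this, div_self h]

lemma lentropy_eq_expLoss (L : 𝒴 → 𝒜 → ℝ) (b : (𝒴 → ℝ) → 𝒜) (hb : IsBayesSelector L b)
    {P : 𝒴 → ℝ} (hP : ∀ y, 0 ≤ P y) (h1 : ∑ y, P y = 1) :
    Lentropy L P = expLoss L P (b P) :=
  le_antisymm (ciInf_le (Set.finite_range _).bddBelow (b P))
    (le_ciInf (hb P hP h1))

lemma slice' (L : 𝒴 → 𝒜 → ℝ) (p : Ω → ℝ) (hp : ∀ ω, 0 ≤ p ω) (Y : Ω → 𝒴)
    (E : Ω → Prop) (Z : Ω → 𝒵) (a : 𝒜) :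
    ∑ z, pr p (fun ω => E ω ∧ Z ω = z) *
        expLoss L (condDist p Y (fun ω => E ω ∧ Z ω = z)) a
      = pr p E * expLoss L (condDist p Y E) a := by
  unfold expLoss
  simp_rw [Finset.mul_sum, ← mul_assoc, mul_condDist p hp]
  rw [Finset.sum_comm]
  refine Finset.sum_congr rfl fun y _ => ?_
  rw [← Finset.sum_mul]
  congr 1
  calc ∑ z, pr p (fun ω => Y ω = y ∧ E ω ∧ Z ω = z)
      = ∑ z, pr p (fun ω => (Y ω = y ∧ E ω) ∧ Z ω = z) :=
        Finset.sum_congr rfl fun z _ => pr_congr p fun ω => (and_assoc).symm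
    _ = pr p (fun ω => Y ω = y ∧ E ω) := pr_fiber p _ Z

/-- Chain rule: `H_L(Y|X) = J(X,Z) + I_L(Y;Z|X)` where `J` is the "joint" term. -/
lemma chain (L : 𝒴 → 𝒜 → ℝ) (b : (𝒴 → ℝ) → 𝒜) (hb : IsBayesSelector L b)
    (p : Ω → ℝ) (hp : ∀ ω, 0 ≤ p ω) (Y : Ω → 𝒴) (X : Ω → 𝒳) (Z : Ω → 𝒵) :
    LcondEntropy L p Y X
      = (∑ x, ∑ z, pr p (fun ω => X ω = x ∧ Z ω = z) *
          expLoss L (condDist p Y (fun ω => X ω = x ∧ Z ω = z))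
            (b (condDist p Y (fun ω => X ω = x ∧ Z ω = z))))
        + LCMI L b p Y Z X := by
  unfold LCMI Ldiv
  rw [← Finset.sum_add_distrib]
  unfold LcondEntropy
  refine Finset.sum_congr rfl fun x _ => ?_
  rw [← Finset.sum_add_distrib]
  have hterm : ∀ z, pr p (fun ω => X ω = x ∧ Z ω = z) *
        expLoss L (condDist p Y (fun ω => X ω = x ∧ Z ω = z))
          (b (condDist p Y (fun ω => X ω = x ∧ Z ω = z)))
      + pr p (fun ω => X ω = x ∧ Z ω = z) *
        (expLoss L (condDist p Y (fun ω => X ω = x ∧ Z ω = z))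
            (b (condDist p Y (fun ω => X ω = x)))
          - expLoss L (condDist p Y (fun ω => X ω = x ∧ Z ω = z))
            (b (condDist p Y (fun ω => X ω = x ∧ Z ω = z))))
      = pr p (fun ω => X ω = x ∧ Z ω = z) *
        expLoss L (condDist p Y (fun ω => X ω = x ∧ Z ω = z))
          (b (condDist p Y (fun ω => X ω = x))) := fun z => by ring
  rw [Finset.sum_congr rfl fun z _ => hterm z,
    slice' L p hp Y (fun ω => X ω = x) Z (b (condDist p Y (fun ω => X ω = x)))]
  by_cases h : pr p (fun ω => X ω = x) = 0
  · simp [h]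
  · rw [lentropy_eq_expLoss L b hb (condDist_nonneg p hp Y _)
      (condDist_sum p Y _ h)]

lemma joint_symm (L : 𝒴 → 𝒜 → ℝ) (b : (𝒴 → ℝ) → 𝒜)
    (p : Ω → ℝ) (Y : Ω → 𝒴) (X : Ω → 𝒳) (Z : Ω → 𝒵) :
    (∑ x, ∑ z, pr p (fun ω => X ω = x ∧ Z ω = z) *
        expLoss L (condDist p Y (fun ω => X ω = x ∧ Z ω = z))
          (b (condDist p Y (fun ω => X ω = x ∧ Z ω = z))))
    = ∑ z, ∑ x, pr p (fun ω => Z ω = z ∧ X ω = x) *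
        expLoss L (condDist p Y (fun ω => Z ω = z ∧ X ω = x))
          (b (condDist p Y (fun ω => Z ω = z ∧ X ω = x))) := by
  rw [Finset.sum_comm]
  refine Finset.sum_congr rfl fun z _ => Finset.sum_congr rfl fun x _ => ?_
  rw [pr_congr p (fun ω => (and_comm : (X ω = x ∧ Z ω = z) ↔ _)),
    condDist_congr p Y (fun ω => (and_comm : (X ω = x ∧ Z ω = z) ↔ _))]

lemma step_eq (L : 𝒴 → 𝒜 → ℝ) (b : (𝒴 → ℝ) → 𝒜) (hb : IsBayesSelector L b)
    (p : Ω → ℝ) (hp : ∀ ω, 0 ≤ p ω) (Y : Ω → 𝒴) (X₁ X₂ : Ω → 𝒳) :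
    LcondEntropy L p Y X₂
      = LcondEntropy L p Y X₁ + LCMI L b p Y X₁ X₂ - LCMI L b p Y X₂ X₁ := by
  have h1 := chain L b hb p hp Y X₂ X₁
  have h2 := chain L b hb p hp Y X₁ X₂
  have h3 := joint_symm L b p Y X₂ X₁
  rw [h3] at h1
  linarith

lemma LCMI_nonneg (L : 𝒴 → 𝒜 → ℝ) (b : (𝒴 → ℝ) → 𝒜) (hb : IsBayesSelector L b)
    (p : Ω → ℝ) (hp : ∀ ω, 0 ≤ p ω) (Y : Ω → 𝒴) (Z : Ω → 𝒵) (X : Ω → 𝒳) :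
    0 ≤ LCMI L b p Y Z X := by
  refine Finset.sum_nonneg fun x _ => Finset.sum_nonneg fun z _ => ?_
  by_cases h : pr p (fun ω => X ω = x ∧ Z ω = z) = 0
  · simp [h]
  · refine mul_nonneg (pr_nonneg p hp _) ?_
    exact sub_nonneg.2 (hb _ (condDist_nonneg p hp Y _) (condDist_sum p Y _ h) _)

end Aux

/-- Theorem 1, exact decomposition.  With
`g₁(θ) = H_L(Y|X_0) + Σ_{k<θ} I_L(Y;X_k|X_{k+1})` and
`g₂(θ) = Σ_{k<θ} I_L(Y;X_{k+1}|X_k)`, one has `H_L(Y|X_θ) = g₁(θ) − g₂(θ)` for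
every `θ ≤ n`, and both `g₁` and `g₂` are nondecreasing in `θ`. -/
theorem condEntropy_decomposition {Ω 𝒳 𝒴 𝒜 : Type*} [Fintype Ω] [Fintype 𝒳]
    [Fintype 𝒴] [Fintype 𝒜] [Nonempty 𝒜]
    (L : 𝒴 → 𝒜 → ℝ) (b : (𝒴 → ℝ) → 𝒜) (hb : IsBayesSelector L b)
    (p : Ω → ℝ) (hp : ∀ ω, 0 ≤ p ω) (hsum : ∑ ω, p ω = 1)
    (Y : Ω → 𝒴) (X : ℕ → Ω → 𝒳) (n : ℕ) :
    (∀ θ ≤ n,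
      LcondEntropy L p Y (X θ)
        = (LcondEntropy L p Y (X 0)
            + ∑ k ∈ Finset.range θ, LCMI L b p Y (X k) (X (k + 1)))
          - ∑ k ∈ Finset.range θ, LCMI L b p Y (X (k + 1)) (X k))
    ∧ (∀ θ₁ θ₂, θ₁ ≤ θ₂ → θ₂ ≤ n →
        LcondEntropy L p Y (X 0)
            + ∑ k ∈ Finset.range θ₁, LCMI L b p Y (X k) (X (k + 1))
          ≤ LcondEntropy L p Y (X 0)
            + ∑ k ∈ Finset.range θ₂, LCMI L b p Y (X k) (X (k + 1)))
    ∧ (∀ θ₁ θ₂, θ₁ ≤ θ₂ → θ₂ ≤ n →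
        ∑ k ∈ Finset.range θ₁, LCMI L b p Y (X (k + 1)) (X k)
          ≤ ∑ k ∈ Finset.range θ₂, LCMI L b p Y (X (k + 1)) (X k)) := by
  refine ⟨?_, ?_, ?_⟩
  · intro θ hθ
    clear hθ
    induction θ with
    | zero => simp
    | succ m ih =>
      have h := step_eq L b hb p hp Y (X m) (X (m + 1))
      rw [Finset.sum_range_succ, Finset.sum_range_succ]
      linarith [ih, h]
  · intro θ₁ θ₂ h _
    refine (add_le_add_iff_left _).mpr ?_
    exact Finset.sum_le_sum_of_subset_of_nonneg (Finset.range_subset_range.mpr h)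
      fun i _ _ => LCMI_nonneg L b hb p hp Y (X i) (X (i + 1))
  · intro θ₁ θ₂ h _
    exact Finset.sum_le_sum_of_subset_of_nonneg (Finset.range_subset_range.mpr h)
      fun i _ _ => LCMI_nonneg L b hb p hp Y (X (i + 1)) (X i)
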